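/- Let b̃ be the unique minimizer of min_{0 ≤ b ≤ C} (1/2)b'(I+O)b - v'b and γ̃ = ∑_i b̃_i. If v_max := max_i v_i > 0, then 0 < γ̃ < v_max. -/
import Mathlib

open Matrix Finset

noncomputable def pimat (k : ℕ) : Matrix (Fin (k-1)) (Fin k) ℝ :=
  Matrix.of fun i j => if (j : ℕ) = 0 then 1 else if (j : ℕ) = (i : ℕ) + 1 then -1 else 0

noncomputable def Pmat (k : ℕ) (y : Fin k) : Matrix (Fin k) (Fin k) ℝ :=
  Matrix.of fun i j =>
    if (i : ℕ) = 0 then (if j = y then 1 else 0)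
    else if i = y then (if (j : ℕ) = 0 then 1 else 0)
    else (if j = i then 1 else 0)

noncomputable def Theta (k : ℕ) : Matrix (Fin (k-1)) (Fin (k-1)) ℝ :=
  1 + Matrix.of fun _ _ => 1

noncomputable def qform (k : ℕ) (v b : Fin (k-1) → ℝ) : ℝ :=
  (1/2) * (b ⬝ᵥ (Theta k *ᵥ b)) - v ⬝ᵥ b

lemma qform_eq (k : ℕ) (v b : Fin (k-1) → ℝ) :
    qform k v b = (1/2)*((∑ i, (b i)^2) + (∑ i, b i)^2) - ∑ i, v i * b i := by
  unfold qform Theta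
  simp only [dotProduct, Matrix.mulVec, Matrix.add_apply, Matrix.one_apply,
    Matrix.of_apply, add_mul, ite_mul, one_mul, zero_mul, Finset.sum_add_distrib,
    Finset.sum_ite_eq, Finset.mem_univ, if_true, mul_add, sq, Finset.sum_mul]

theorem stmt8 (k : ℕ) (hk : 2 ≤ k) (C : ℝ) (hC : 0 < C) (v b : Fin (k-1) → ℝ)
    (hfeas : ∀ i, b i ∈ Set.Icc 0 C)
    (hmin : ∀ b', (∀ i, b' i ∈ Set.Icc 0 C) → qform k v b ≤ qform k v b')
    (hne : (Finset.univ : Finset (Fin (k-1))).Nonempty)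
    (hvmax : 0 < Finset.univ.sup' hne v) :
    0 < ∑ j, b j ∧ ∑ j, b j < Finset.univ.sup' hne v := by
  set M := Finset.univ.sup' hne v with hM
  set γ := ∑ j, b j with hγ
  have hb0 : ∀ i, 0 ≤ b i := fun i => (hfeas i).1
  have hγ0 : 0 ≤ γ := Finset.sum_nonneg fun i _ => hb0 i
  obtain ⟨i0, -, hi0⟩ := Finset.exists_mem_eq_sup' hne v
  -- Part 1: 0 < γ
  have hpos : 0 < γ := by
    rcases hγ0.lt_or_eq with h | h
    · exact h
    · exfalso
      have hb : ∀ i ∈ Finset.univ, b i = 0 :=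
        (Finset.sum_eq_zero_iff_of_nonneg (fun i _ => hb0 i)).mp h.symm
      set t := min C (M/2) with ht
      have ht0 : 0 < t := lt_min hC (by linarith)
      have htM : t < M := lt_of_le_of_lt (min_le_right _ _) (by linarith)
      set b' : Fin (k-1) → ℝ := fun i => if i = i0 then t else 0 with hb'
      have hfeas' : ∀ i, b' i ∈ Set.Icc 0 C := by
        intro i
        simp only [hb']
        split
        · exact ⟨le_of_lt ht0, min_le_left _ _⟩
        · exact ⟨le_refl 0, le_of_lt hC⟩
      have hle := hmin b' hfeas'
      rw [qform_eq, qform_eq] at hle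
      have e1 : ∑ i, (b' i)^2 = t^2 := by
        simp [hb', apply_ite (·^2), Finset.sum_ite_eq']
      have e2 : ∑ i, b' i = t := by simp [hb', Finset.sum_ite_eq']
      have e3 : ∑ i, v i * b' i = v i0 * t := by
        simp [hb', mul_ite, Finset.sum_ite_eq']
      have eb1 : ∑ i, (b i)^2 = 0 := by
        apply Finset.sum_eq_zero; intro i hi; rw [hb i hi]; ring
      have eb3 : ∑ i, v i * b i = 0 := by
        apply Finset.sum_eq_zero; intro i hi; rw [hb i hi]; ring
      rw [e1, e2, e3, eb1, eb3, ← hγ, h] at hle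
      rw [← hi0] at hle
      nlinarith
  refine ⟨hpos, ?_⟩
  -- Part 2: γ < M
  by_contra hcon
  push_neg at hcon   -- M ≤ γ
  set S := ∑ i, (b i)^2 with hS
  set P := ∑ i, v i * b i with hP
  have hSpos : 0 < S := by
    obtain ⟨i, -, hi⟩ : ∃ i ∈ Finset.univ, 0 < b i := by
      by_contra hc
      push_neg at hc
      have : γ ≤ 0 := Finset.sum_nonpos fun i _ => hc i (Finset.mem_univ i)
      linarith
    have : (b i)^2 ≤ S := Finset.single_le_sum (f := fun i => (b i)^2)
      (fun i _ => sq_nonneg _) (Finset.mem_univ i)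
    nlinarith
  have hPM : P ≤ M * γ := by
    rw [hγ, Finset.mul_sum]
    apply Finset.sum_le_sum
    intro i _
    exact mul_le_mul_of_nonneg_right (Finset.le_sup' v (Finset.mem_univ i)) (hb0 i)
  have hQ : P < S + γ^2 := by nlinarith
  have hQpos : 0 < S + γ^2 := by nlinarith
  -- choose scaling c
  set c := max 0 (P / (S + γ^2)) with hc
  have hc0 : 0 ≤ c := le_max_left _ _
  have hc1 : c < 1 := by
    rw [hc, max_lt_iff]
    exact ⟨one_pos, (div_lt_one hQpos).mpr hQ⟩
  set b' : Fin (k-1) → ℝ := fun i => c * b i with hb'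
  have hfeas' : ∀ i, b' i ∈ Set.Icc 0 C := by
    intro i
    constructor
    · exact mul_nonneg hc0 (hb0 i)
    · calc c * b i ≤ 1 * b i := mul_le_mul_of_nonneg_right (le_of_lt hc1) (hb0 i)
      _ = b i := one_mul _
      _ ≤ C := (hfeas i).2
  have hle := hmin b' hfeas'
  rw [qform_eq, qform_eq] at hle
  have e1 : ∑ i, (b' i)^2 = c^2 * S := by
    rw [hS, Finset.mul_sum]
    exact Finset.sum_congr rfl fun i _ => by simp [hb']; ring
  have e2 : ∑ i, b' i = c * γ := by rw [hγ, Finset.mul_sum]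
  have e3 : ∑ i, v i * b' i = c * P := by
    rw [hP, Finset.mul_sum]
    exact Finset.sum_congr rfl fun i _ => by simp [hb']; ring
  rw [e1, e2, e3, ← hγ, ← hS, ← hP, mul_pow] at hle
  -- hle : 1/2 * (S + γ^2) - P ≤ 1/2 * (c^2*S + c^2*γ^2) - c*P
  clear_value S P γ M
  rcases le_or_gt P 0 with hP0 | hP0
  · have hcz : c = 0 := by
      rw [hc, max_eq_left]
      exact div_nonpos_of_nonpos_of_nonneg hP0 (le_of_lt hQpos)
    rw [hcz] at hle
    nlinarith
  · have hcz : c = P / (S + γ^2) := by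
      rw [hc, max_eq_right]
      exact div_nonneg hP0.le hQpos.le
    rw [hcz] at hle
    have key : 1/2 * ((P / (S + γ^2))^2 * S + (P / (S + γ^2))^2 * γ^2) - P / (S + γ^2) * P
        = -(P^2 / (2*(S + γ^2))) := by
      field_simp
      ring
    rw [key] at hle
    have hdiv : P^2/(2*(S+γ^2)) * (2*(S+γ^2)) = P^2 := div_mul_cancel₀ _ (by positivity)
    have h2 : (1/2*(S+γ^2) - P) * (2*(S+γ^2)) ≤ -(P^2/(2*(S+γ^2))) * (2*(S+γ^2)) :=
      mul_le_mul_of_nonneg_right hle (by positivity)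
    rw [neg_mul, hdiv] at h2
    nlinarith [hQ, hQpos]
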